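/- If |X| ≤ 3, then any two distributions over linear orders on X that induce the same system of choice probabilities are equal; i.e., the random utility model is identified on sets of at most three alternatives. -/
import Mathlib


open Finset
open scoped Classical

/-- A linear order on a finite set `α`, encoded as a ranking bijection to `Fin (card α)`;
higher value means more preferred. -/
abbrev RankOrd (α : Type*) [Fintype α] := α ≃ Fin (Fintype.card α)

variable {α : Type*} [Fintype α] [DecidableEq α]

/-- `ν` is a probability distribution over linear orders. -/
def IsDist [Fintype α] (ν : RankOrd α → ℝ) : Prop :=
  (∀ π, 0 ≤ ν π) ∧ ∑ π : RankOrd α, ν π = 1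

/-- The choice probabilities induced by a distribution over linear orders. -/
noncomputable def choiceProb (ν : RankOrd α → ℝ) (A : Finset α) (x : α) : ℝ :=
  ∑ π : RankOrd α, if ∀ y ∈ A, y ≠ x → (π y : ℕ) < (π x : ℕ) then ν π else 0

/-- `ν` rationalizes the system of choice probabilities `P`. -/
def Rationalizes (ν : RankOrd α → ℝ) (P : Finset α → α → ℝ) : Prop :=
  IsDist ν ∧ ∀ A : Finset α, A.Nonempty → ∀ x ∈ A, P A x = choiceProb ν A x

/-- The Block–Marschak polynomial `q(x,A)` of a system of choice probabilities `P`. -/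
noncomputable def bm (P : Finset α → α → ℝ) (x : α) (A : Finset α) : ℝ :=
  ∑ A' ∈ Finset.univ.powerset.filter (fun A' => A ⊆ A'),
    (-1 : ℝ) ^ (A' \ A).card * P A' x

/-- A path: a maximal chain `X = A_0 ⊋ A_1 ⊋ ⋯ ⊋ A_{|X|} = ∅` decreasing by one element. -/
def IsPath (ρ : ℕ → Finset α) : Prop :=
  ρ 0 = Finset.univ ∧ ρ (Fintype.card α) = ∅ ∧
    ∀ i < Fintype.card α, ρ (i + 1) ⊆ ρ i ∧ (ρ i \ ρ (i + 1)).card = 1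

/-- A supported path: all Block–Marschak edge weights along it are strictly positive. -/
def SupportedPath (P : Finset α → α → ℝ) (ρ : ℕ → Finset α) : Prop :=
  IsPath ρ ∧ ∀ i < Fintype.card α, ∀ x ∈ ρ i \ ρ (i + 1), 0 < bm P x (ρ i)

/-- Two paths are branching: they agree on a consecutive block of nodes
`{i,…,j} ⊆ {1,…,|X|-1}` while differing at positions `i-1` and `j+1`. -/
def BranchingPair (ρ ρ' : ℕ → Finset α) : Prop :=
  ∃ i j, 1 ≤ i ∧ i ≤ j ∧ j ≤ Fintype.card α - 1 ∧
    ρ (i - 1) ≠ ρ' (i - 1) ∧ ρ (j + 1) ≠ ρ' (j + 1) ∧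
    ∀ m, i ≤ m → m ≤ j → ρ m = ρ' m

/-- The path associated with the linear order `π`: `A_i` is `X` minus the top `i` elements. -/
def pathOf (π : RankOrd α) : ℕ → Finset α :=
  fun i => Finset.univ.filter (fun w => (π w : ℕ) < Fintype.card α - i)

/-- The weak upper contour set of `x` according to `π`. -/
def upper (π : RankOrd α) (x : α) : Finset α :=
  Finset.univ.filter (fun w => (π x : ℕ) ≤ (π w : ℕ))

/-- `π ∈ M_{x,A}`: `π` ranks `X \ A` above `x` and `x` above `A \ {x}`. -/
def inM (π : RankOrd α) (x : α) (A : Finset α) : Prop :=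
  (∀ z, z ∉ A → (π x : ℕ) < (π z : ℕ)) ∧ ∀ y ∈ A, y ≠ x → (π y : ℕ) < (π x : ℕ)

/-- On a set of at most three alternatives, the random utility model is identified:
two distributions over linear orders inducing the same choice probabilities are equal. -/
theorem identified_of_card_le_three {α : Type*} [Fintype α] [DecidableEq α]
    (h : Fintype.card α ≤ 3) (ν₁ ν₂ : RankOrd α → ℝ)
    (h₁ : IsDist ν₁) (h₂ : IsDist ν₂)
    (hsame : ∀ A : Finset α, A.Nonempty → ∀ x ∈ A,
      choiceProb ν₁ A x = choiceProb ν₂ A x) :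
    ν₁ = ν₂ := by
  have hinj : ∀ (e : RankOrd α) (a c : α), (e a : ℕ) = (e c : ℕ) → a = c :=
    fun e a c hh => e.injective (Fin.ext hh)
  have heqv : ∀ (e f : RankOrd α), (∀ a, (e a : ℕ) = (f a : ℕ)) → e = f :=
    fun e f hh => Equiv.ext fun a => Fin.ext (hh a)
  have hlt : ∀ (e : RankOrd α) (a : α), (e a : ℕ) < Fintype.card α :=
    fun e a => (e a).isLt
  funext π
  rcases le_or_gt (Fintype.card α) 1 with hle | hgt
  · -- subsingleton case
    haveI : Subsingleton (RankOrd α) := ⟨fun e f => heqv e f (fun a => by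
      have := hlt e a; have := hlt f a; omega)⟩
    have key : ∀ ν : RankOrd α → ℝ, IsDist ν → ν π = 1 := by
      intro ν hν
      have e : ∑ π' : RankOrd α, ν π' = ν π :=
        Finset.sum_eq_single_of_mem π (Finset.mem_univ π)
          (fun b _ hb => absurd (Subsingleton.elim b π) hb)
      have hs : ∀ (s₁ s₂ : Fintype (RankOrd α)),
          @Finset.sum (RankOrd α) ℝ _ (@Finset.univ _ s₁) ν
            = @Finset.sum (RankOrd α) ℝ _ (@Finset.univ _ s₂) ν := by
        intro s₁ s₂
        have hss : s₁ = s₂ := Subsingleton.elim _ _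
        subst hss
        rfl
      rw [← hν.2]
      exact e.symm.trans (hs _ _)
    rw [key ν₁ h₁, key ν₂ h₂]
  · have hcase : Fintype.card α = 2 ∨ Fintype.card α = 3 := by omega
    rcases hcase with hc | hc
    · -- card = 2
      obtain ⟨x, hπx⟩ : ∃ x, (π x : ℕ) = 1 := ⟨π.symm ⟨1, by omega⟩, by simp⟩
      have key : ∀ ν : RankOrd α → ℝ, choiceProb ν Finset.univ x = ν π := by
        intro ν
        unfold choiceProb
        have hcond : ∀ y ∈ Finset.univ, y ≠ x → (π y : ℕ) < (π x : ℕ) := by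
          intro y _ hyx
          have hne : (π y : ℕ) ≠ (π x : ℕ) := fun he => hyx (hinj π y x he)
          have := hlt π y
          omega
        refine (Finset.sum_eq_single_of_mem π (Finset.mem_univ π) ?_).trans
          (if_pos hcond)
        intro b _ hbπ
        rw [if_neg]
        intro hC
        apply hbπ
        obtain ⟨w, hbw⟩ : ∃ w, (b w : ℕ) = 1 := ⟨b.symm ⟨1, by omega⟩, by simp⟩
        have hwx : w = x := by
          by_contra hwx
          have := hC w (Finset.mem_univ w) hwx
          have := hlt b x
          omega
        rw [hwx] at hbw
        apply heqv
        intro a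
        by_cases hax : a = x
        · rw [hax]; omega
        · have h1 := hC a (Finset.mem_univ a) hax
          have h2 : (π a : ℕ) ≠ (π x : ℕ) := fun he => hax (hinj π a x he)
          have := hlt π a
          omega
      calc ν₁ π = choiceProb ν₁ Finset.univ x := (key ν₁).symm
        _ = choiceProb ν₂ Finset.univ x :=
            hsame Finset.univ ⟨x, Finset.mem_univ x⟩ x (Finset.mem_univ x)
        _ = ν₂ π := key ν₂
    · -- card = 3
      obtain ⟨x, hπx⟩ : ∃ x, (π x : ℕ) = 2 := ⟨π.symm ⟨2, by omega⟩, by simp⟩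
      obtain ⟨y, hπy⟩ : ∃ y, (π y : ℕ) = 1 := ⟨π.symm ⟨1, by omega⟩, by simp⟩
      have hxy : x ≠ y := fun he => by rw [he] at hπx; omega
      have key : ∀ ν : RankOrd α → ℝ,
          choiceProb ν (Finset.univ.erase x) y - choiceProb ν Finset.univ y = ν π := by
        intro ν
        unfold choiceProb
        rw [← Finset.sum_sub_distrib]
        refine (Finset.sum_eq_single_of_mem π (Finset.mem_univ π) ?_).trans ?_
        · intro b _ hbπ
          by_cases hC1 : ∀ z ∈ Finset.univ.erase x, z ≠ y → (b z : ℕ) < (b y : ℕ)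
          · by_cases hC2 : ∀ z ∈ Finset.univ, z ≠ y → (b z : ℕ) < (b y : ℕ)
            · rw [if_pos hC1, if_pos hC2]; ring
            · exfalso
              apply hbπ
              push_neg at hC2
              obtain ⟨z, _, hzy, hzb⟩ := hC2
              have hzx : z = x := by
                by_contra hzx
                exact absurd (hC1 z (Finset.mem_erase.mpr ⟨hzx, Finset.mem_univ z⟩) hzy)
                  (by omega)
              rw [hzx] at hzb
              have hne : (b y : ℕ) ≠ (b x : ℕ) := fun he => hxy (hinj b x y he.symm)
              have hyltx : (b y : ℕ) < (b x : ℕ) := by omega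
              obtain ⟨w, hbw⟩ : ∃ w, (b w : ℕ) = 2 := ⟨b.symm ⟨2, by omega⟩, by simp⟩
              have hwx : w = x := by
                by_contra hwz
                have hbx := hlt b x
                by_cases hwy : w = y
                · rw [hwy] at hbw; omega
                · have := hC1 w (Finset.mem_erase.mpr ⟨hwz, Finset.mem_univ w⟩) hwy
                  omega
              rw [hwx] at hbw
              obtain ⟨v, hbv⟩ : ∃ v, (b v : ℕ) = 1 := ⟨b.symm ⟨1, by omega⟩, by simp⟩
              have hvy : v = y := by
                by_contra hvy
                have hvx : v ≠ x := fun he => by rw [he] at hbv; omega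
                have := hC1 v (Finset.mem_erase.mpr ⟨hvx, Finset.mem_univ v⟩) hvy
                omega
              rw [hvy] at hbv
              apply heqv
              intro a
              by_cases hax : a = x
              · rw [hax]; omega
              · by_cases hay : a = y
                · rw [hay]; omega
                · have h1 := hC1 a (Finset.mem_erase.mpr ⟨hax, Finset.mem_univ a⟩) hay
                  have h2 : (π a : ℕ) ≠ (π x : ℕ) := fun he => hax (hinj π a x he)
                  have h3 : (π a : ℕ) ≠ (π y : ℕ) := fun he => hay (hinj π a y he)
                  have := hlt π a
                  omega
          · have hC2 : ¬ ∀ z ∈ Finset.univ, z ≠ y → (b z : ℕ) < (b y : ℕ) :=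
              fun hh => hC1 (fun z _ hzy => hh z (Finset.mem_univ z) hzy)
            rw [if_neg hC1, if_neg hC2]; ring
        · have hC1 : ∀ z ∈ Finset.univ.erase x, z ≠ y → (π z : ℕ) < (π y : ℕ) := by
            intro z hz hzy
            have hzx : z ≠ x := (Finset.mem_erase.mp hz).1
            have h2 : (π z : ℕ) ≠ (π x : ℕ) := fun he => hzx (hinj π z x he)
            have h3 : (π z : ℕ) ≠ (π y : ℕ) := fun he => hzy (hinj π z y he)
            have := hlt π z
            omega
          have hC2 : ¬ ∀ z ∈ Finset.univ, z ≠ y → (π z : ℕ) < (π y : ℕ) := by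
            intro hh
            have := hh x (Finset.mem_univ x) hxy
            omega
          rw [if_pos hC1, if_neg hC2]; ring
      have hyem : y ∈ Finset.univ.erase x :=
        Finset.mem_erase.mpr ⟨fun he => hxy he.symm, Finset.mem_univ y⟩
      calc ν₁ π = choiceProb ν₁ (Finset.univ.erase x) y - choiceProb ν₁ Finset.univ y :=
            (key ν₁).symm
        _ = choiceProb ν₂ (Finset.univ.erase x) y - choiceProb ν₂ Finset.univ y := by
            rw [hsame (Finset.univ.erase x) ⟨y, hyem⟩ y hyem,
              hsame Finset.univ ⟨y, Finset.mem_univ y⟩ y (Finset.mem_univ y)]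
        _ = ν₂ π := key ν₂
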